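/- Laurent phenomenon in rank 2, type A_2: every term of the sequence defined by x_{m+1} = (x_m + 1)/x_{m-1} in ℚ(x_1, x_2) is a Laurent polynomial in x_1 and x_2 with integer coefficients, i.e., lies in ℤ[x_1^{±1}, x_2^{±1}]. -/

import Mathlib

/-- The field ℚ(x₁, x₂): fraction field of the polynomial ring in two variables. -/
noncomputable abbrev F2 : Type := FractionRing (MvPolynomial (Fin 2) ℚ)

noncomputable def X1 : F2 := algebraMap (MvPolynomial (Fin 2) ℚ) F2 (MvPolynomial.X 0)
noncomputable def X2 : F2 := algebraMap (MvPolynomial (Fin 2) ℚ) F2 (MvPolynomial.X 1)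

/-- `z` is a Laurent polynomial in `x₁, x₂` with integer coefficients. -/
def IsIntLaurent (z : F2) : Prop :=
  ∃ (p : MvPolynomial (Fin 2) ℤ) (a b : ℕ),
    z * X1 ^ a * X2 ^ b = MvPolynomial.eval₂ (Int.castRingHom F2) ![X1, X2] p

lemma A2inj : Function.Injective (algebraMap (MvPolynomial (Fin 2) ℚ) F2) :=
  IsFractionRing.injective _ _

lemma mapne {p : MvPolynomial (Fin 2) ℚ} (h : p ≠ 0) :
    algebraMap (MvPolynomial (Fin 2) ℚ) F2 p ≠ 0 :=
  fun h0 => h (A2inj (by simpa using h0))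

lemma hX1 : X1 ≠ 0 := mapne (MvPolynomial.X_ne_zero 0)
lemma hX2 : X2 ≠ 0 := mapne (MvPolynomial.X_ne_zero 1)

lemma hX2p1 : X2 + 1 ≠ 0 := by
  have h : algebraMap (MvPolynomial (Fin 2) ℚ) F2 (MvPolynomial.X 1 + 1) = X2 + 1 := by
    simp [X2, map_add, map_one]
  rw [← h]
  refine mapne ?_
  intro h'
  have := congrArg (MvPolynomial.coeff 0) h'
  simp [MvPolynomial.coeff_X'] at this

lemma hX1p1 : X1 + 1 ≠ 0 := by
  have h : algebraMap (MvPolynomial (Fin 2) ℚ) F2 (MvPolynomial.X 0 + 1) = X1 + 1 := by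
    simp [X1, map_add, map_one]
  rw [← h]
  refine mapne ?_
  intro h'
  have := congrArg (MvPolynomial.coeff 0) h'
  simp [MvPolynomial.coeff_X'] at this

lemma hX12p1 : X1 + X2 + 1 ≠ 0 := by
  have h : algebraMap (MvPolynomial (Fin 2) ℚ) F2 (MvPolynomial.X 0 + MvPolynomial.X 1 + 1)
      = X1 + X2 + 1 := by
    simp [X1, X2, map_add, map_one]
  rw [← h]
  refine mapne ?_
  intro h'
  have := congrArg (MvPolynomial.coeff 0) h'
  simp [MvPolynomial.coeff_X'] at this

/-- The period-5 cycle of values. -/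
noncomputable def Y : Fin 5 → F2 :=
  ![X1, X2, (X2 + 1) / X1, (X1 + X2 + 1) / (X1 * X2), (X1 + 1) / X2]

lemma Yne : ∀ i : Fin 5, Y i ≠ 0 := by
  intro i
  fin_cases i
  · exact hX1
  · exact hX2
  · exact div_ne_zero hX2p1 hX1
  · exact div_ne_zero hX12p1 (mul_ne_zero hX1 hX2)
  · exact div_ne_zero hX1p1 hX2

lemma Yrec : ∀ i : Fin 5, Y (i + 2) * Y i = Y (i + 1) + 1 := by
  have h1 := hX1; have h2 := hX2
  intro i
  fin_cases i
  · show (X2 + 1) / X1 * X1 = X2 + 1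
    field_simp
  · show (X1 + X2 + 1) / (X1 * X2) * X2 = (X2 + 1) / X1 + 1
    field_simp
    ring
  · show (X1 + 1) / X2 * ((X2 + 1) / X1) = (X1 + X2 + 1) / (X1 * X2) + 1
    field_simp
    ring
  · show X1 * ((X1 + X2 + 1) / (X1 * X2)) = (X1 + 1) / X2 + 1
    field_simp
    ring
  · show X2 * ((X1 + 1) / X2) = X1 + 1
    field_simp

open Fin.NatCast

/-- Laurent phenomenon in rank 2, type A₂. -/
theorem typeA2_laurent (x : ℕ → F2)
    (h1 : x 1 = X1) (h2 : x 2 = X2)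
    (hrec : ∀ m, 1 ≤ m → x (m + 2) * x m = x (m + 1) + 1) :
    ∀ m, 1 ≤ m → IsIntLaurent (x m) := by
  have key : ∀ k : ℕ, x (k + 1) = Y k ∧ x (k + 2) = Y (k + 1) := by
    intro k
    induction k with
    | zero =>
      constructor
      · simpa [Y] using h1
      · simpa [Y] using h2
    | succ n ih =>
      obtain ⟨ihn, ihn1⟩ := ih
      have hr := hrec (n + 1) (by omega)
      rw [show n + 1 + 2 = n + 3 from rfl, show n + 1 + 1 = n + 2 from rfl, ihn, ihn1] at hr
      have hY := Yrec n
      have h3 : x (n + 3) = Y (↑n + 2) :=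
        mul_right_cancel₀ (Yne (n : Fin 5)) (hr.trans hY.symm)
      refine ⟨by simpa using ihn1, ?_⟩
      convert h3 using 2
      push_cast
      rw [add_assoc]
      rfl
  have lau : ∀ i : Fin 5, IsIntLaurent (Y i) := by
    intro i
    fin_cases i
    · exact ⟨MvPolynomial.X 0, 0, 0, by simp [Y]⟩
    · exact ⟨MvPolynomial.X 1, 0, 0, by simp [Y]⟩
    · refine ⟨MvPolynomial.X 1 + 1, 1, 0, ?_⟩
      show (X2 + 1) / X1 * X1 ^ 1 * X2 ^ 0 = _
      rw [pow_one, pow_zero, mul_one, div_mul_cancel₀ _ hX1]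
      simp
    · refine ⟨MvPolynomial.X 0 + MvPolynomial.X 1 + 1, 1, 1, ?_⟩
      show (X1 + X2 + 1) / (X1 * X2) * X1 ^ 1 * X2 ^ 1 = _
      have h1 := hX1; have h2 := hX2
      simp only [MvPolynomial.eval₂_add, MvPolynomial.eval₂_X, MvPolynomial.eval₂_one,
        Matrix.cons_val_zero, Matrix.cons_val_one, Matrix.head_cons, pow_one]
      field_simp
    · refine ⟨MvPolynomial.X 0 + 1, 0, 1, ?_⟩
      show (X1 + 1) / X2 * X1 ^ 0 * X2 ^ 1 = _
      rw [pow_one, pow_zero, mul_one, div_mul_cancel₀ _ hX2]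
      simp
  intro m hm
  obtain ⟨k, rfl⟩ : ∃ k, m = k + 1 := ⟨m - 1, by omega⟩
  rw [(key k).1]
  exact lau _
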